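/- For every k ≥ 1, if A is a co-c.e. set admitting a computable k-enumeration, then A has an infinite computable subset. Consequently, a co-c.e. set is constant-bound immune if and only if it is immune. -/

import Mathlib

open Classical

/-- The characteristic function of a set of naturals, as a partial function. -/
noncomputable def CharFun (X : Set ℕ) : ℕ →. ℕ :=
  fun n => Part.some (if n ∈ X then 1 else 0)

/-- Partial recursiveness relative to an oracle `O`. -/
inductive RecIn (O : ℕ →. ℕ) : (ℕ →. ℕ) → Prop
  | oracle : RecIn O O
  | zero : RecIn O (fun _ => Part.some 0)
  | succ : RecIn O (fun n => Part.some n.succ)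
  | left : RecIn O (fun n => Part.some n.unpair.1)
  | right : RecIn O (fun n => Part.some n.unpair.2)
  | pair {f g} : RecIn O f → RecIn O g →
      RecIn O (fun n => Nat.pair <$> f n <*> g n)
  | comp {f g} : RecIn O f → RecIn O g →
      RecIn O (fun n => g n >>= f)
  | prec {f g} : RecIn O f → RecIn O g →
      RecIn O (Nat.unpaired fun a n =>
        n.rec (f a) fun y IH => do {let i ← IH; g (Nat.pair a (Nat.pair y i))})
  | rfind {f} : RecIn O f →
      RecIn O (fun a => Nat.rfind fun n => (fun m => decide (m = 0)) <$> f (Nat.pair a n))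

/-- A (typed) function is computable in oracle `O`. -/
def ComputableInOracle {α β : Type} [Primcodable α] [Primcodable β] (O : ℕ →. ℕ) (f : α → β) : Prop :=
  RecIn O (fun n => Part.some (Encodable.encode (Option.map f (Encodable.decode (α := α) n))))

/-- A set of naturals is computable in oracle `O`. -/
def SetComputableIn (O : ℕ →. ℕ) (X : Set ℕ) : Prop :=
  RecIn O (CharFun X)

/-- A (typed) predicate is computably enumerable in oracle `O`. -/
def CEIn {α : Type} [Primcodable α] (O : ℕ →. ℕ) (p : α → Prop) : Prop :=
  ∃ f : ℕ →. ℕ, RecIn O f ∧ ∀ a : α, (f (Encodable.encode a)).Dom ↔ p a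

/-- A (typed) predicate is computably enumerable. -/
def CEPred {α : Type} [Primcodable α] (p : α → Prop) : Prop :=
  ∃ f : α →. Unit, Partrec f ∧ ∀ a, (f a).Dom ↔ p a

/-- A set of naturals is co-c.e. -/
def CoCE (A : Set ℕ) : Prop := CEPred (fun n => n ∉ A)

/-- The members of an array are mutually disjoint. -/
def ArrayDisjoint (F : ℕ → Finset ℕ) : Prop :=
  ∀ i j, i ≠ j → Disjoint (F i) (F j)

/-- An array traces a set `A` if each of its members meets `A`. -/
def Traces (F : ℕ → Finset ℕ) (A : Set ℕ) : Prop :=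
  ∀ i, ∃ x ∈ F i, x ∈ A

/-- A set is hyperimmune if it is infinite and not traced by any computable array. -/
def Hyperimmune (A : Set ℕ) : Prop :=
  A.Infinite ∧ ∀ F : ℕ → Finset ℕ, Computable F → ArrayDisjoint F → ¬ Traces F A

/-- A set is hyperimmune relative to the oracle `O`. -/
def HyperimmuneIn (O : ℕ →. ℕ) (A : Set ℕ) : Prop :=
  A.Infinite ∧ ∀ F : ℕ → Finset ℕ, ComputableInOracle O F → ArrayDisjoint F → ¬ Traces F A

/-- A set is immune if it is infinite and has no infinite computable subset. -/
def Immune (A : Set ℕ) : Prop :=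
  A.Infinite ∧ ∀ W : Set ℕ, W.Infinite → ComputablePred (· ∈ W) → ¬ W ⊆ A

/-- A set is immune relative to the oracle `O`. -/
def ImmuneIn (O : ℕ →. ℕ) (A : Set ℕ) : Prop :=
  A.Infinite ∧ ∀ W : Set ℕ, W.Infinite → SetComputableIn O W → ¬ W ⊆ A

/-- The effective join of two sets of naturals. -/
def SetJoin (Y Z : Set ℕ) : Set ℕ :=
  {n | if n % 2 = 0 then n / 2 ∈ Y else n / 2 ∈ Z}

/-- `X` is Turing reducible to `Z`. -/
def TuringLE (X Z : Set ℕ) : Prop := SetComputableIn (CharFun Z) X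

/-- `F` is a computable k-enumeration of `A`. -/
def KEnum (k : ℕ) (F : ℕ → Finset ℕ) (A : Set ℕ) : Prop :=
  Computable F ∧ (∀ i, (F i).card = k) ∧
  (∀ i, ∀ x ∈ F i, ∀ y ∈ F (i + 1), x < y) ∧
  (∀ i, ∃ x ∈ F i, x ∈ A)

/-- A set is constant-bound immune if it is infinite and admits no computable
constant-bound enumeration. -/
def CBImmune (A : Set ℕ) : Prop :=
  A.Infinite ∧ ∀ (k : ℕ) (F : ℕ → Finset ℕ), ¬ KEnum k F A


section CBInfra
open Encodable Denumerable


/-- encode at the `Primcodable` instance used by `Computable`. -/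
abbrev encF (s : Finset ℕ) : ℕ := @Encodable.encode (Finset ℕ) (Primcodable.toEncodable) s
abbrev ofNatL (n : ℕ) : List ℕ := ofNat (List ℕ) n

lemma finset_eq_raise' (s : Finset ℕ) :
    s = Denumerable.raise'Finset (ofNatL (encF s)) 0 := by
  have h : (ofNat (Finset ℕ) (encF s)) =
      Finset.map (eqv ℕ).symm.toEmbedding (raise'Finset (ofNatL (encF s)) 0) := by
    with_unfolding_all rfl
  have h2 : ofNat (Finset ℕ) (encF s) = s := ofNat_encode s
  rw [h2] at h
  have he : (eqv ℕ).symm.toEmbedding = Function.Embedding.refl ℕ := by ext x; rfl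
  rw [he, Finset.map_refl] at h
  exact h

lemma sort_eq_raise' (s : Finset ℕ) :
    s.sort (· ≤ ·) = raise' (ofNatL (encF s)) 0 := by
  have h := finset_eq_raise' s
  refine (fun hp h1 h2 => List.Perm.eq_of_pairwise' (r := (· ≤ ·)) h1 h2 hp) ?_ ?_ ?_
  · apply (Multiset.coe_eq_coe (α := ℕ)).1
    rw [Finset.sort_eq]
    conv_lhs => rw [h]
    rfl
  · exact Finset.pairwise_sort _ _
  · exact (raise'_sorted _ _).pairwise.imp le_of_lt

def psum (l : List ℕ) : ℕ → ℕ
  | 0 => l.getD 0 0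
  | i + 1 => psum l i + l.getD (i + 1) 0

lemma psum_cons_zero (m : ℕ) (l : List ℕ) : psum (m :: l) 0 = m := rfl

lemma psum_cons_succ (m : ℕ) (l : List ℕ) (i : ℕ) :
    psum (m :: l) (i + 1) = m + psum l i := by
  induction i with
  | zero =>
      show psum (m :: l) 0 + (m :: l).getD 1 0 = m + psum l 0
      rw [psum_cons_zero]; rfl
  | succ i ih =>
      show psum (m :: l) (i + 1) + (m :: l).getD (i + 2) 0 = m + psum l (i + 1)
      rw [ih]
      have h : (m :: l).getD (i + 2) 0 = l.getD (i + 1) 0 := rfl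
      rw [h]
      show m + psum l i + l.getD (i+1) 0 = m + (psum l i + l.getD (i+1) 0)
      omega

lemma raise'_eq (l : List ℕ) (n : ℕ) :
    raise' l n = (List.range l.length).map (fun i => n + i + psum l i) := by
  induction l generalizing n with
  | nil => simp [raise']
  | cons m l ih =>
      simp only [raise', List.length_cons, List.range_succ_eq_map, List.map_cons, List.map_map]
      rw [List.cons.injEq]
      refine ⟨by rw [psum_cons_zero]; omega, ?_⟩
      rw [ih (m + n + 1)]
      congr 1
      funext i
      simp only [Function.comp, psum_cons_succ]
      omega

lemma primrec_psum : Primrec₂ psum := by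
  have h : Primrec₂ (fun (l : List ℕ) (i : ℕ) =>
      Nat.rec (motive := fun _ => ℕ) (l.getD 0 0)
        (fun y IH => IH + l.getD (y + 1) 0) i) := by
    apply Primrec.nat_rec' (f := fun p : List ℕ × ℕ => p.2)
      (g := fun p : List ℕ × ℕ => p.1.getD 0 0)
      (h := fun (p : List ℕ × ℕ) (q : ℕ × ℕ) => q.2 + p.1.getD (q.1 + 1) 0)
    · exact Primrec.snd
    · exact (Primrec.list_getD 0).comp Primrec.fst (Primrec.const 0)
    · exact Primrec.nat_add.comp (Primrec.snd.comp Primrec.snd)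
        ((Primrec.list_getD 0).comp (Primrec.fst.comp Primrec.fst)
          (Primrec.succ.comp (Primrec.fst.comp Primrec.snd)))
  refine h.of_eq ?_
  intro l i
  induction i with
  | zero => rfl
  | succ i ih =>
      show (Nat.rec (motive := fun _ => ℕ) (l.getD 0 0)
        (fun y IH => IH + l.getD (y + 1) 0) i) + l.getD (i + 1) 0 = psum l (i + 1)
      rw [ih]
      rfl

lemma primrec_raise'0 : Primrec (fun l : List ℕ => raise' l 0) := by
  have h : Primrec (fun l : List ℕ =>
      (List.range l.length).map (fun i => 0 + i + psum l i)) := by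
    apply Primrec.list_map (Primrec.list_range.comp Primrec.list_length)
    exact Primrec₂.mk <| Primrec.nat_add.comp
      (Primrec.nat_add.comp (Primrec.const 0) Primrec.snd)
      (primrec_psum.comp Primrec.fst Primrec.snd)
  exact h.of_eq fun l => (raise'_eq l 0).symm

lemma primrec_sortL : Primrec (fun s : Finset ℕ => s.sort (· ≤ ·)) := by
  have h : Primrec (fun s : Finset ℕ => raise' (ofNatL (encF s)) 0) :=
    primrec_raise'0.comp ((Primrec.ofNat (List ℕ)).comp Primrec.encode)
  exact h.of_eq fun s => (sort_eq_raise' s).symm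


-- membership in a list is primrec
lemma primrec_memL : PrimrecRel (fun (x : ℕ) (l : List ℕ) => x ∈ l) := by
  have h : Primrec₂ (fun (x : ℕ) (l : List ℕ) => decide (l.idxOf x < l.length)) :=
    (Primrec.nat_lt.comp (Primrec.list_idxOf.comp Primrec.fst Primrec.snd)
      (Primrec.list_length.comp Primrec.snd)).decide
  refine Primrec₂.primrecRel (h.of_eq fun x l => ?_)
  rw [decide_eq_decide]
  exact List.idxOf_lt_length_iff

-- approximations of the halting of a code
def appr (c : Nat.Partrec.Code) (x s : ℕ) : Bool := (Nat.Partrec.Code.evaln s c x).isSome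

lemma primrec_appr (c : Nat.Partrec.Code) : Primrec₂ (appr c) :=
  Primrec.option_isSome.comp <| Nat.Partrec.Code.primrec_evaln.comp <|
    Primrec.pair (Primrec.pair Primrec.snd (Primrec.const c)) Primrec.fst

lemma appr_mono {c : Nat.Partrec.Code} {x s s' : ℕ} (h : s ≤ s') (ha : appr c x s = true) :
    appr c x s' = true := by
  unfold appr at *
  rcases Option.isSome_iff_exists.1 ha with ⟨y, hy⟩
  exact Option.isSome_iff_exists.2 ⟨y, Nat.Partrec.Code.evaln_mono h hy⟩

lemma appr_sound {c : Nat.Partrec.Code} {x s : ℕ} (h : appr c x s = true) :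
    (c.eval x).Dom := by
  rcases Option.isSome_iff_exists.1 h with ⟨y, hy⟩
  exact Part.dom_iff_mem.2 ⟨y, Nat.Partrec.Code.evaln_sound hy⟩

lemma appr_complete {c : Nat.Partrec.Code} {x : ℕ} (h : (c.eval x).Dom) :
    ∃ s, appr c x s = true := by
  rcases Part.dom_iff_mem.1 h with ⟨y, hy⟩
  rcases Nat.Partrec.Code.evaln_complete.1 hy with ⟨s, hs⟩
  exact ⟨s, Option.isSome_iff_exists.2 ⟨y, hs⟩⟩

-- filtering out elements confirmed outside A
def filt (c : Nat.Partrec.Code) (l : List ℕ) (s : ℕ) : List ℕ :=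
  l.filter (fun x => !(appr c x s))

lemma mem_filt {c l s x} : x ∈ filt c l s ↔ x ∈ l ∧ appr c x s = false := by
  simp [filt, List.mem_filter]

lemma primrec_filt (c : Nat.Partrec.Code) : Primrec₂ (filt c) := by
  have h : Primrec₂ (fun (l : List ℕ) (s : ℕ) =>
      l.filterMap (fun x => bif appr c x s then none else some x)) := by
    apply Primrec.listFilterMap (Primrec.fst)
    exact Primrec.cond ((primrec_appr c).comp Primrec.snd (Primrec.snd.comp Primrec.fst))
      (Primrec.const none) (Primrec.option_some.comp Primrec.snd)
  refine h.of_eq fun l s => ?_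
  induction l with
  | nil => rfl
  | cons a l ih =>
      cases h : appr c a s <;>
        simp [filt, List.filter_cons, List.filterMap_cons, h] at ih ⊢ <;> exact ih

lemma length_filt_lt {c l s} (h : ∃ x ∈ l, appr c x s = true) :
    (filt c l s).length < l.length := by
  induction l with
  | nil => simp at h
  | cons a l ih =>
      rcases h with ⟨x, hx, hxs⟩
      rcases List.mem_cons.1 hx with rfl | hx'
      · simp only [filt, List.filter_cons, hxs]
        simp
        exact List.length_filter_le _ _
      · cases ha : appr c a s <;> simp only [filt, List.filter_cons, ha] at ih ⊢
        · simp only [Bool.not_false, List.length_cons]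
          exact Nat.succ_lt_succ (ih ⟨x, hx', hxs⟩)
        · simp only [Bool.not_true]
          exact Nat.lt_succ_of_lt (ih ⟨x, hx', hxs⟩)

-- bounded search characteristic function
def chiStep (L : ℕ → List ℕ) (N : ℕ) (x : ℕ) (p : ℕ × Bool) : Bool :=
  p.2 || (decide (N ≤ p.1) && decide (x ∈ L p.1))

def chi (L : ℕ → List ℕ) (N x : ℕ) : Bool :=
  Nat.rec false (fun y IH => chiStep L N x (y, IH)) (x + 1)

lemma chi_rec_spec (L : ℕ → List ℕ) (N x : ℕ) : ∀ t : ℕ,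
    (Nat.rec false (fun y IH => chiStep L N x (y, IH)) t = true)
      ↔ ∃ i, i < t ∧ N ≤ i ∧ x ∈ L i := by
  intro t
  induction t with
  | zero => simp
  | succ t ih =>
      show (Nat.rec false _ t || (decide (N ≤ t) && decide (x ∈ L t))) = true ↔ _
      rw [Bool.or_eq_true, ih, Bool.and_eq_true, decide_eq_true_iff, decide_eq_true_iff]
      constructor
      · rintro (⟨i, h1, h2, h3⟩ | ⟨h1, h2⟩)
        · exact ⟨i, Nat.lt_succ_of_lt h1, h2, h3⟩
        · exact ⟨t, Nat.lt_succ_self _, h1, h2⟩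
      · rintro ⟨i, h1, h2, h3⟩
        rcases Nat.lt_succ_iff_lt_or_eq.1 h1 with h | rfl
        · exact Or.inl ⟨i, h, h2, h3⟩
        · exact Or.inr ⟨h2, h3⟩

lemma chi_spec (L : ℕ → List ℕ) (N x : ℕ) :
    chi L N x = true ↔ ∃ i, i ≤ x ∧ N ≤ i ∧ x ∈ L i := by
  have h := chi_rec_spec L N x (x + 1)
  constructor
  · intro hc
    rcases h.1 hc with ⟨i, h1, h2, h3⟩
    exact ⟨i, Nat.lt_succ_iff.1 h1, h2, h3⟩
  · rintro ⟨i, h1, h2, h3⟩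
    exact h.2 ⟨i, Nat.lt_succ_iff.2 h1, h2, h3⟩

lemma computable_chi {L : ℕ → List ℕ} (hL : Computable L) (N : ℕ) :
    Computable (chi L N) := by
  have h1 : Computable (fun q : ℕ × (ℕ × Bool) => q.2.2) := Computable.snd.comp Computable.snd
  have h2 : Computable (fun q : ℕ × (ℕ × Bool) => decide (N ≤ q.2.1)) :=
    ((Primrec.nat_le.comp (Primrec.const N) Primrec.id).decide.to_comp).comp
      (Computable.fst.comp Computable.snd)
  have h3 : Computable (fun q : ℕ × (ℕ × Bool) => decide (q.1 ∈ L q.2.1)) := by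
    have hm : Computable₂ (fun (x : ℕ) (l : List ℕ) => decide (x ∈ l)) :=
      primrec_memL.decide.to_comp
    exact hm.comp Computable.fst (hL.comp (Computable.fst.comp Computable.snd))
  have hh : Computable₂ (chiStep L N) :=
    (((Primrec.dom_bool₂ (· || ·)).to_comp).comp h1
      (((Primrec.dom_bool₂ (· && ·)).to_comp).comp h2 h3)).to₂
  exact Computable.nat_rec (f := fun x : ℕ => x + 1) (g := fun _ : ℕ => false)
    (h := chiStep L N) Computable.succ (Computable.const false) hh

-- total search is computable
lemma computable_find {p : ℕ → ℕ → Bool} (hp : Computable₂ p) (H : ∀ m, ∃ n, p m n = true) :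
    Computable (fun m => Nat.find (H m)) := by
  have pp : Partrec₂ (fun (m : ℕ) => ((p m : ℕ →. Bool))) := hp.partrec₂
  have hr := Partrec.rfind pp
  apply hr.of_eq_tot
  intro m
  rw [Nat.mem_rfind]
  constructor
  · exact Part.mem_some_iff.2 (Nat.find_spec (H m)).symm
  · intro k hk
    refine Part.mem_some_iff.2 ?_
    have := Nat.find_min (H m) hk
    simp only [Bool.not_eq_true] at this
    exact this.symm

-- iteration of a computable function
lemma computable_iter {g : ℕ → ℕ} (hg : Computable g) (a₀ : ℕ) :
    Computable (fun j => Nat.rec (motive := fun _ => ℕ) a₀ (fun _ IH => g IH) j) :=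
  Computable.nat_rec Computable.id (Computable.const a₀)
    ((hg.comp (Computable.snd.comp Computable.snd)).to₂)


lemma encF_eq_lower (s : Finset ℕ) :
    encF s = @Encodable.encode (List ℕ) Primcodable.toEncodable (lower' (s.sort (· ≤ ·)) 0) := by
  have h1 : ofNatL (encF s) = lower' (s.sort (· ≤ ·)) 0 := by
    rw [sort_eq_raise' s, lower_raise']
  have h2 : @Encodable.encode (List ℕ) Primcodable.toEncodable (ofNatL (encF s)) = encF s :=
    encode_ofNat _
  rw [← h1, h2]

lemma primrec_singletonF : Primrec (fun n : ℕ => ({n} : Finset ℕ)) := by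
  rw [← Primrec.encode_iff]
  have h : Primrec (fun n : ℕ => @Encodable.encode (List ℕ) Primcodable.toEncodable [n]) :=
    Primrec.encode.comp (Primrec.list_cons.comp Primrec.id (Primrec.const []))
  refine h.of_eq fun n => ?_
  have h1 : encF {n} = @Encodable.encode (List ℕ) Primcodable.toEncodable
      (lower' (({n} : Finset ℕ).sort (· ≤ ·)) 0) := encF_eq_lower {n}
  have h2 : ({n} : Finset ℕ).sort (· ≤ ·) = [n] := Finset.sort_singleton _ n
  have h3 : lower' [n] 0 = [n] := by simp [lower']
  rw [h2, h3] at h1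
  exact h1.symm

-- unbounded sets of naturals
lemma nat_infinite_exists_gt {s : Set ℕ} (hs : s.Infinite) (m : ℕ) : ∃ x ∈ s, m < x := by
  by_contra h
  push_neg at h
  exact hs (Set.Finite.subset (Set.finite_Iic m) h)

lemma nat_infinite_of_unbounded {s : Set ℕ} (h : ∀ m, ∃ x ∈ s, m < x) : s.Infinite := by
  intro hf
  obtain ⟨b, hb⟩ := hf.bddAbove
  obtain ⟨x, hx, hbx⟩ := h b
  exact absurd (hb hx) (by omega)

/-- internal list-valued enumerations -/
def GoodSeq (A : Set ℕ) (k : ℕ) (L : ℕ → List ℕ) : Prop :=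
  Computable L ∧ (∀ i, L i ≠ []) ∧ (∀ i, (L i).length ≤ k) ∧
  (∀ i, ∀ x ∈ L i, ∀ y ∈ L (i + 1), x < y) ∧ (∀ i, ∃ x ∈ L i, x ∈ A)

lemma goodSeq_cross {A k L} (h : GoodSeq A k L) :
    ∀ j i, i < j → ∀ x ∈ L i, ∀ y ∈ L j, x < y := by
  obtain ⟨-, hne, -, hinc, -⟩ := h
  intro j
  induction j with
  | zero => omega
  | succ j ih =>
      intro i hij x hx y hy
      rcases Nat.lt_succ_iff_lt_or_eq.1 hij with hlt | rfl
      · obtain ⟨z, hz⟩ := List.exists_mem_of_ne_nil _ (hne j)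
        exact lt_trans (ih i hlt x hx z hz) (hinc j z hz y hy)
      · exact hinc i x hx y hy

lemma goodSeq_ge {A k L} (h : GoodSeq A k L) : ∀ i, ∀ x ∈ L i, i ≤ x := by
  intro i
  induction i with
  | zero => omega
  | succ i ih =>
      intro x hx
      obtain ⟨z, hz⟩ := List.exists_mem_of_ne_nil _ (h.2.1 i)
      have h1 := h.2.2.2.1 i z hz x hx
      have h2 := ih z hz
      omega

lemma goodSeq_main : ∀ (k : ℕ) (A : Set ℕ) (L : ℕ → List ℕ), CoCE A → GoodSeq A k L →
    ∃ W : Set ℕ, W.Infinite ∧ ComputablePred (· ∈ W) ∧ W ⊆ A := by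
  intro k
  induction k with
  | zero =>
      intro A L _ h
      exact absurd (Nat.le_zero.1 (h.2.2.1 0))
        (fun h0 => h.2.1 0 (List.length_eq_zero_iff.1 h0))
  | succ k ih =>
      intro A L hA hL
      have hcross := goodSeq_cross hL
      have hge := goodSeq_ge hL
      obtain ⟨hLc, hne, hlen, hinc, htr⟩ := hL
      obtain ⟨f, hf, hfdom⟩ := hA
      have hf' : Partrec (fun n => (f n).map (fun _ => 0) : ℕ →. ℕ) :=
        hf.map ((Computable.const 0).to₂ : Computable₂ fun (_ : ℕ) (_ : Unit) => (0 : ℕ))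
      obtain ⟨c, hc⟩ := Nat.Partrec.Code.exists_code.1 (Partrec.nat_iff.1 hf')
      have hdom : ∀ x : ℕ, (c.eval x).Dom ↔ x ∉ A := by
        intro x
        rw [hc]
        exact Iff.trans (Iff.rfl) (hfdom x)
      by_cases hS : {i | ∃ x ∈ L i, x ∉ A}.Infinite
      · -- infinitely many blocks contain a confirmed non-element
        set p : ℕ → ℕ → Bool := fun m q => decide (m < q.unpair.1) &&
          decide ((filt c (L q.unpair.1) q.unpair.2).length < (L q.unpair.1).length) with hp_def
        have hp : Computable₂ p := by
          have hu1 : Computable (fun q : ℕ => q.unpair.1) :=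
            Computable.fst.comp Computable.unpair
          have hu2 : Computable (fun q : ℕ => q.unpair.2) :=
            Computable.snd.comp Computable.unpair
          have hflt : Computable (fun q : ℕ => filt c (L q.unpair.1) q.unpair.2) :=
            ((primrec_filt c).to_comp).comp (hLc.comp hu1) hu2
          have hlt : Computable (fun q : ℕ =>
              decide ((filt c (L q.unpair.1) q.unpair.2).length < (L q.unpair.1).length)) :=
            (Primrec.nat_lt.decide.to_comp).comp (Computable.list_length.comp hflt)
              (Computable.list_length.comp (hLc.comp hu1))
          have hmlt : Computable₂ (fun (m q : ℕ) => decide (m < q.unpair.1)) :=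
            (Primrec.nat_lt.decide.to_comp).comp Computable.fst
              ((Primrec.fst.comp (Primrec.unpair.comp Primrec.snd)).to_comp)
          exact (((Primrec.dom_bool₂ (· && ·)).to_comp).comp
            (hmlt : Computable fun mq : ℕ × ℕ => decide (mq.1 < mq.2.unpair.1))
            (hlt.comp Computable.snd)).to₂
        have H : ∀ m, ∃ q, p m q = true := by
          intro m
          obtain ⟨i, hiS, him⟩ := nat_infinite_exists_gt hS m
          obtain ⟨x, hxL, hxA⟩ := hiS
          obtain ⟨s, hs⟩ := appr_complete ((hdom x).2 hxA)
          refine ⟨Nat.pair i s, ?_⟩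
          rw [hp_def]
          simp only [Nat.unpair_pair, Bool.and_eq_true, decide_eq_true_iff]
          exact ⟨him, length_filt_lt ⟨x, hxL, hs⟩⟩
        have hν : Computable (fun m => Nat.find (H m)) := computable_find hp H
        have hνspec : ∀ m, m < (Nat.find (H m)).unpair.1 ∧
            (filt c (L (Nat.find (H m)).unpair.1) (Nat.find (H m)).unpair.2).length <
              (L (Nat.find (H m)).unpair.1).length := by
          intro m
          have h0 : p m (Nat.find (H m)) = true := Nat.find_spec (H m)
          have h1 : (decide (m < (Nat.find (H m)).unpair.1) &&
              decide ((filt c (L (Nat.find (H m)).unpair.1) (Nat.find (H m)).unpair.2).length <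
                (L (Nat.find (H m)).unpair.1).length)) = true := h0
          simpa only [Bool.and_eq_true, decide_eq_true_iff] using h1
        -- iterate
        set d : ℕ → ℕ := fun j => Nat.rec (motive := fun _ => ℕ) (Nat.find (H 0))
          (fun _ IH => (fun q : ℕ => Nat.find (H q.unpair.1)) IH) j with hd_def
        have hdc : Computable d :=
          computable_iter (hν.comp (Computable.fst.comp Computable.unpair)) _
        have hdgood : ∀ j, (filt c (L (d j).unpair.1) (d j).unpair.2).length <
            (L (d j).unpair.1).length := by
          intro j
          cases j with
          | zero => exact (hνspec 0).2
          | succ j => exact (hνspec ((d j).unpair.1)).2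
        have hdmono : ∀ j, (d j).unpair.1 < (d (j + 1)).unpair.1 := by
          intro j
          exact (hνspec ((d j).unpair.1)).1
        set G : ℕ → List ℕ := fun j => filt c (L (d j).unpair.1) (d j).unpair.2 with hG_def
        have hGc : Computable G := by
          have hu1 : Computable (fun j : ℕ => (d j).unpair.1) :=
            Computable.fst.comp (Computable.unpair.comp hdc)
          have hu2 : Computable (fun j : ℕ => (d j).unpair.2) :=
            Computable.snd.comp (Computable.unpair.comp hdc)
          exact ((primrec_filt c).to_comp).comp (hLc.comp hu1) hu2
        have hGwit : ∀ j, ∃ x ∈ G j, x ∈ A := by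
          intro j
          obtain ⟨x, hxL, hxA⟩ := htr ((d j).unpair.1)
          refine ⟨x, ?_, hxA⟩
          rw [hG_def]
          refine mem_filt.2 ⟨hxL, ?_⟩
          cases hax : appr c x ((d j).unpair.2) with
          | false => rfl
          | true => exact absurd ((hdom x).1 (appr_sound hax)) (fun h => h hxA)
        have hImono : StrictMono (fun j => (d j).unpair.1) :=
          strictMono_nat_of_lt_succ hdmono
        apply ih A G
        · exact ⟨f, hf, hfdom⟩
        refine ⟨hGc, ?_, ?_, ?_, hGwit⟩
        · intro j
          obtain ⟨x, hx, _⟩ := hGwit j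
          exact List.ne_nil_of_mem hx
        · intro j
          have h1 := hdgood j
          have h2 := hlen ((d j).unpair.1)
          show (filt c (L (d j).unpair.1) (d j).unpair.2).length ≤ k
          omega
        · intro j x hx y hy
          have hx' : x ∈ L (d j).unpair.1 := (mem_filt.1 hx).1
          have hy' : y ∈ L (d (j + 1)).unpair.1 := (mem_filt.1 hy).1
          exact hcross _ _ (hdmono j) x hx' y hy'
      · -- only finitely many blocks leave A
        have hfin := Set.not_infinite.1 hS
        obtain ⟨N, hN⟩ := hfin.bddAbove
        have key : ∀ i, N + 1 ≤ i → ∀ x ∈ L i, x ∈ A := by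
          intro i hi x hx
          by_contra hxA
          have : i ≤ N := hN ⟨x, hx, hxA⟩
          omega
        refine ⟨{x | chi L (N + 1) x = true}, ?_, ?_, ?_⟩
        · apply nat_infinite_of_unbounded
          intro m
          set i := max (N + 1) (m + 1) with hi_def
          obtain ⟨x, hx⟩ := List.exists_mem_of_ne_nil _ (hne i)
          have hxi : i ≤ x := hge i x hx
          refine ⟨x, ?_, by omega⟩
          exact (chi_spec L (N + 1) x).2 ⟨i, hxi, by omega, hx⟩
        · exact ComputablePred.computable_iff.2 ⟨chi L (N + 1), computable_chi hLc _, rfl⟩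
        · intro x hx
          obtain ⟨i, _, hNi, hxL⟩ := (chi_spec L (N + 1) x).1 hx
          exact key i hNi x hxL

end CBInfra
/-- A co-c.e. set with a computable k-enumeration has an infinite computable subset;
consequently a co-c.e. set is c.b-immune iff it is immune. -/
theorem coCE_kEnum_computable_subset :
    (∀ (k : ℕ), 1 ≤ k → ∀ (A : Set ℕ) (F : ℕ → Finset ℕ), CoCE A → KEnum k F A →
      ∃ W : Set ℕ, W.Infinite ∧ ComputablePred (· ∈ W) ∧ W ⊆ A) ∧
    (∀ A : Set ℕ, CoCE A → (CBImmune A ↔ Immune A)) := by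
  have part1 : ∀ (k : ℕ), 1 ≤ k → ∀ (A : Set ℕ) (F : ℕ → Finset ℕ), CoCE A → KEnum k F A →
      ∃ W : Set ℕ, W.Infinite ∧ ComputablePred (· ∈ W) ∧ W ⊆ A := by
    intro k hk A F hA hKE
    obtain ⟨hFc, hcard, hinc, htr⟩ := hKE
    apply goodSeq_main k A (fun i => (F i).sort (· ≤ ·)) hA
    refine ⟨primrec_sortL.to_comp.comp hFc, ?_, ?_, ?_, ?_⟩
    · intro i
      obtain ⟨x, hx, _⟩ := htr i
      exact List.ne_nil_of_mem ((Finset.mem_sort _).2 hx)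
    · intro i
      rw [Finset.length_sort, hcard i]
    · intro i x hx y hy
      exact hinc i x ((Finset.mem_sort _).1 hx) y ((Finset.mem_sort _).1 hy)
    · intro i
      obtain ⟨x, hx, hxA⟩ := htr i
      exact ⟨x, (Finset.mem_sort _).2 hx, hxA⟩
  refine ⟨part1, ?_⟩
  intro A hA
  constructor
  · rintro ⟨hInf, hNoEnum⟩
    refine ⟨hInf, ?_⟩
    intro W hWinf hWcomp hWsub
    obtain ⟨χ, hχ, hpeq⟩ := ComputablePred.computable_iff.1 hWcomp
    have H : ∀ m, ∃ x, (decide (m < x) && χ x) = true := by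
      intro m
      obtain ⟨x, hxW, hmx⟩ := nat_infinite_exists_gt hWinf m
      refine ⟨x, ?_⟩
      have hx' : χ x = true := (congrFun hpeq x) ▸ hxW
      rw [hx']
      simp [hmx]
    have hp2 : Computable₂ (fun (m x : ℕ) => decide (m < x) && χ x) :=
      (((Primrec.dom_bool₂ (· && ·)).to_comp).comp
        ((Primrec.nat_lt.decide.to_comp).comp Computable.fst Computable.snd)
        (hχ.comp Computable.snd)).to₂
    have hνc : Computable (fun m => Nat.find (H m)) := computable_find hp2 H
    have hνgt : ∀ m, m < Nat.find (H m) ∧ χ (Nat.find (H m)) = true := by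
      intro m
      have h0 := Nat.find_spec (H m)
      simpa only [Bool.and_eq_true, decide_eq_true_iff] using h0
    set e : ℕ → ℕ := fun j => Nat.rec (motive := fun _ => ℕ) (Nat.find (H 0))
      (fun _ IH => (fun q : ℕ => Nat.find (H q)) IH) j with he_def
    have hec : Computable e := computable_iter hνc _
    have heW : ∀ j, χ (e j) = true := by
      intro j
      cases j with
      | zero => exact (hνgt 0).2
      | succ j => exact (hνgt (e j)).2
    have hemono : ∀ j, e j < e (j + 1) := fun j => (hνgt (e j)).1
    have heA : ∀ j, e j ∈ A := fun j => hWsub ((congrFun hpeq (e j)).symm ▸ heW j)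
    apply hNoEnum 1 (fun j => ({e j} : Finset ℕ))
    refine ⟨primrec_singletonF.to_comp.comp hec, ?_, ?_, ?_⟩
    · intro i; simp
    · intro i x hx y hy
      rw [Finset.mem_singleton] at hx hy
      rw [hx, hy]
      exact hemono i
    · intro i
      exact ⟨e i, Finset.mem_singleton_self _, heA i⟩
  · rintro ⟨hInf, hNoSub⟩
    refine ⟨hInf, ?_⟩
    intro k F hKE
    have hk : 1 ≤ k := by
      obtain ⟨x, hx, _⟩ := hKE.2.2.2 0
      have hc := hKE.2.1 0
      have hpos := Finset.card_pos.2 ⟨x, hx⟩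
      omega
    obtain ⟨W, h1, h2, h3⟩ := part1 k hk A F hA hKE
    exact hNoSub W h1 h2 h3
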